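/- Let n be an integer with n ≥ 3 and let k be an integer with 1 ≤ k ≤ ⌊n/2⌋. Then mbt(C(n,k)) ≥ Δ(C(n,k)) if n is even and k is odd, and mbt(C(n,k)) ≥ Δ(C(n,k)) + 1 in all other cases. -/

import Mathlib

open SimpleGraph

/-- The circulant graph `C(ℤ_n, S)`: vertices are `ZMod n`, and distinct `i, j` are
adjacent iff `i - j ≡ s` or `i - j ≡ -s (mod n)` for some `s ∈ S`. -/
def circulant (n : ℕ) (S : Set ℤ) : SimpleGraph (ZMod n) :=
  SimpleGraph.fromRel fun i j => ∃ s ∈ S, i - j = (s : ZMod n)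

/-- `C(n,k) = C(ℤ_n, {1, k})`. -/
def circ (n k : ℕ) : SimpleGraph (ZMod n) := circulant n {1, (k : ℤ)}

/-- The maximum degree `Δ(G)` of a graph. -/
noncomputable def maxDeg {V : Type*} (G : SimpleGraph V) : ℕ :=
  sSup (Set.range fun v => (G.neighborSet v).ncard)

/-- `x` lies strictly between positions `a` and `b` on the circular layout
(cut open along the linear order of `Fin N`). -/
def ChordBetween {N : ℕ} (x a b : Fin N) : Prop := min a b < x ∧ x < max a b

/-- The chords joining the positions `a,b` and `c,d` on a circle cross iff exactly one of
`c, d` lies strictly between `a` and `b`. -/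
def ChordCross {N : ℕ} (a b c d : Fin N) : Prop :=
  Xor' (ChordBetween c a b) (ChordBetween d a b)

/-- `G` admits a matching book embedding in `m` pages: there is a circular layout
(a bijection of the vertices with `Fin (Nat.card V)`) and a proper edge coloring with
`m` colors such that crossing edges get distinct colors. -/
def HasMBE {V : Type*} (G : SimpleGraph V) (m : ℕ) : Prop :=
  ∃ (σ : V ≃ Fin (Nat.card V)) (col : V → V → Fin m),
    (∀ u v, G.Adj u v → col u v = col v u) ∧
    (∀ u v w, G.Adj u v → G.Adj u w → v ≠ w → col u v ≠ col u w) ∧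
    (∀ a b c d, G.Adj a b → G.Adj c d →
      ChordCross (σ a) (σ b) (σ c) (σ d) → col a b ≠ col c d)

/-- The matching book thickness `mbt(G)`. -/
noncomputable def mbt {V : Type*} (G : SimpleGraph V) : ℕ :=
  sInf {m | HasMBE G m}

/-- The remainder algorithm from the paper: `k₀ = k`, `r₀ = r`,
`k_{i+1} = k_i - r_i`, `r_{i+1} = k_i mod k_{i+1}`. -/
def euclidSeq (k r : ℕ) : ℕ → ℕ × ℕ
  | 0 => (k, r)
  | i + 1 =>
      ((euclidSeq k r i).1 - (euclidSeq k r i).2,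
       (euclidSeq k r i).1 % ((euclidSeq k r i).1 - (euclidSeq k r i).2))

/- ## Auxiliary lemmas -/


lemma even_card_of_involutive {α : Type*} [Fintype α] [DecidableEq α] (f : α → α)
    (h1 : ∀ a, f (f a) = a) (h2 : ∀ a, f a ≠ a) : Even (Fintype.card α) := by
  haveI : Fact (Nat.Prime 2) := ⟨Nat.prime_two⟩
  let F : Function.End α := f
  have hf : F ^ (2 ^ 1) = 1 := by
    have h : F ^ (2 ^ 1) = F * F := by norm_num; exact sq F
    rw [h]; funext x; exact h1 x
  have hmod := Equiv.Perm.card_fixedPoints_modEq (p := 2) (n := 1) hf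
  haveI : IsEmpty (Function.fixedPoints F) := ⟨fun x => h2 x.1 x.2⟩
  have h0 : Fintype.card (Function.fixedPoints F) = 0 := Fintype.card_eq_zero
  rw [h0] at hmod
  exact Nat.even_iff.2 hmod

lemma even_finset_card_of_involutive {α : Type*} [DecidableEq α] (s : Finset α) (f : α → α)
    (hmem : ∀ a ∈ s, f a ∈ s) (h1 : ∀ a ∈ s, f (f a) = a) (h2 : ∀ a ∈ s, f a ≠ a) :
    Even s.card := by
  rw [← Fintype.card_coe]
  exact even_card_of_involutive (fun x => ⟨f x.1, hmem x.1 x.2⟩)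
    (fun a => Subtype.ext (h1 a.1 a.2)) (fun a h => h2 a.1 a.2 (congrArg Subtype.val h))

lemma not_chordBetween_left {N : ℕ} (a b : Fin N) : ¬ ChordBetween a a b := by
  rintro ⟨h1, h2⟩
  rcases le_total a b with h | h
  · rw [min_eq_left h] at h1; exact lt_irrefl _ h1
  · rw [max_eq_left h] at h2; exact lt_irrefl _ h2

lemma not_chordBetween_right {N : ℕ} (a b : Fin N) : ¬ ChordBetween b a b := by
  rintro ⟨h1, h2⟩
  rcases le_total a b with h | h
  · rw [max_eq_right h] at h2; exact lt_irrefl _ h2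
  · rw [min_eq_right h] at h1; exact lt_irrefl _ h1

lemma not_chordCross_self {N : ℕ} (a b : Fin N) : ¬ ChordCross a b a b := by
  rintro (⟨h, -⟩ | ⟨h, -⟩)
  · exact not_chordBetween_left a b h
  · exact not_chordBetween_right a b h

lemma not_chordCross_swap {N : ℕ} (a b : Fin N) : ¬ ChordCross a b b a := by
  rintro (⟨h, -⟩ | ⟨h, -⟩)
  · exact not_chordBetween_right a b h
  · exact not_chordBetween_left a b h

lemma encode_inj {N a b a' b' : ℕ} (hb : b < N) (hb' : b' < N)
    (h : a * N + b = a' * N + b') : a = a' ∧ b = b' := by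
  have key : ∀ x y u v : ℕ, x < y → u < N → x * N + u < y * N + v := by
    intro x y u v hxy hu
    calc x * N + u < x * N + N := by omega
      _ = (x + 1) * N := by ring
      _ ≤ y * N := Nat.mul_le_mul_right N hxy
      _ ≤ y * N + v := Nat.le_add_right _ _
  have ha : a = a' := by
    rcases lt_trichotomy a a' with h' | h' | h'
    · exact absurd h (Nat.ne_of_lt (key _ _ _ _ h' hb))
    · exact h'
    · exact absurd h.symm (Nat.ne_of_lt (key _ _ _ _ h' hb'))
  subst ha
  exact ⟨rfl, by omega⟩

/-- Every finite graph has a matching book embedding in `(Nat.card V)^2` pages. -/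
lemma hasMBE_sq {V : Type*} [Finite V] (G : SimpleGraph V) :
    HasMBE G (Nat.card V * Nat.card V) := by
  set N := Nat.card V with hN
  let σ : V ≃ Fin N := Finite.equivFin V
  have hbound : ∀ u v : V, min (σ u).val (σ v).val * N + max (σ u).val (σ v).val < N * N := by
    intro u v
    have h1 : min (σ u).val (σ v).val < N := lt_of_le_of_lt (min_le_left _ _) (σ u).isLt
    have h2 : max (σ u).val (σ v).val < N := max_lt (σ u).isLt (σ v).isLt
    calc min (σ u).val (σ v).val * N + max (σ u).val (σ v).val
        < min (σ u).val (σ v).val * N + N := by omega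
      _ = (min (σ u).val (σ v).val + 1) * N := by ring
      _ ≤ N * N := Nat.mul_le_mul_right N h1
  refine ⟨σ, fun u v => ⟨_, hbound u v⟩, fun u v _ => ?_, fun u v w _ _ hvw => ?_,
    fun a b c d hab hcd hcr => ?_⟩
  · exact Fin.ext (by simp [min_comm, max_comm])
  · intro hcol
    have h := Fin.val_eq_val _ _ |>.2 hcol
    simp only at h
    obtain ⟨h1, h2⟩ := encode_inj (max_lt (σ u).isLt (σ v).isLt)
      (max_lt (σ u).isLt (σ w).isLt) h
    have hvw' : (σ v).val = (σ w).val := by omega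
    exact hvw (σ.injective (Fin.ext hvw'))
  · intro hcol
    have h := Fin.val_eq_val _ _ |>.2 hcol
    simp only at h
    obtain ⟨h1, h2⟩ := encode_inj (max_lt (σ a).isLt (σ b).isLt)
      (max_lt (σ c).isLt (σ d).isLt) h
    have : ((σ c).val = (σ a).val ∧ (σ d).val = (σ b).val) ∨
        ((σ c).val = (σ b).val ∧ (σ d).val = (σ a).val) := by omega
    rcases this with ⟨e1, e2⟩ | ⟨e1, e2⟩
    · rw [Fin.ext e1, Fin.ext e2] at hcr
      exact not_chordCross_self _ _ hcr
    · rw [Fin.ext e1, Fin.ext e2] at hcr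
      exact not_chordCross_swap _ _ hcr

lemma le_of_hasMBE {V : Type*} [Finite V] (G : SimpleGraph V) {m : ℕ} (h : HasMBE G m) (v : V) :
    (G.neighborSet v).ncard ≤ m := by
  obtain ⟨σ, col, hsym, hprop, -⟩ := h
  have hinj : Set.InjOn (col v) (G.neighborSet v) := fun w1 h1 w2 h2 he => by
    by_contra hne; exact hprop v w1 w2 h1 h2 hne he
  calc (G.neighborSet v).ncard = (col v '' G.neighborSet v).ncard :=
        (Set.ncard_image_of_injOn hinj).symm
    _ ≤ (Set.univ : Set (Fin m)).ncard :=
        Set.ncard_le_ncard (Set.subset_univ _) Set.finite_univ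
    _ = m := by simp [Set.ncard_univ]

/-- In a `d`-regular graph with a proper `d`-edge-coloring, each color class is a
perfect matching. -/
lemma exists_pm {V : Type*} [Finite V] (G : SimpleGraph V) {d : ℕ}
    (hreg : ∀ v, (G.neighborSet v).ncard = d) (col : V → V → Fin d)
    (hsym : ∀ u v, G.Adj u v → col u v = col v u)
    (hprop : ∀ u v w, G.Adj u v → G.Adj u w → v ≠ w → col u v ≠ col u w) (c : Fin d) :
    ∃ f : V → V, (∀ v, G.Adj v (f v)) ∧ (∀ v, col v (f v) = c) ∧ (∀ v, f (f v) = v) ∧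
      (∀ v w, G.Adj v w → col v w = c → f v = w) := by
  have hex : ∀ v, ∃ w, G.Adj v w ∧ col v w = c := by
    intro v
    have hinj : Set.InjOn (col v) (G.neighborSet v) := fun w1 h1 w2 h2 he => by
      by_contra hne; exact hprop v w1 w2 h1 h2 hne he
    have himg : col v '' G.neighborSet v = Set.univ := by
      apply Set.eq_of_subset_of_ncard_le (Set.subset_univ _) _ Set.finite_univ
      simp [Set.ncard_image_of_injOn hinj, hreg, Set.ncard_univ]
    have hc : c ∈ col v '' G.neighborSet v := himg ▸ Set.mem_univ c
    obtain ⟨w, hw, hcw⟩ := hc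
    exact ⟨w, hw, hcw⟩
  choose f hf1 hf2 using hex
  have huniq : ∀ v w, G.Adj v w → col v w = c → f v = w := by
    intro v w hadj hc
    by_contra hne
    exact hprop v (f v) w (hf1 v) hadj hne (by rw [hf2, hc])
  refine ⟨f, hf1, hf2, fun v => ?_, huniq⟩
  exact huniq (f v) v (G.adj_symm (hf1 v)) (by rw [← hsym v (f v) (hf1 v)]; exact hf2 v)

lemma odd_no_hasMBE {V : Type*} [Fintype V] [DecidableEq V] (G : SimpleGraph V) {d : ℕ}
    (hreg : ∀ v, (G.neighborSet v).ncard = d) (hd : 0 < d)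
    (hodd : ¬ Even (Fintype.card V)) (h : HasMBE G d) : False := by
  obtain ⟨σ, col, hsym, hprop, -⟩ := h
  obtain ⟨f, hf1, -, hf3, -⟩ := exists_pm G hreg col hsym hprop ⟨0, hd⟩
  exact hodd (even_card_of_involutive f hf3 (fun v h => G.ne_of_adj (hf1 v) h.symm))

/-- In a `d`-regular graph with an MBE in `d` pages, the endpoints of every edge
occupy positions of opposite parity. -/
lemma parity_of_hasMBE {V : Type*} [Finite V] (G : SimpleGraph V) {d : ℕ}
    (hreg : ∀ v, (G.neighborSet v).ncard = d) (h : HasMBE G d) :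
    ∃ σ : V ≃ Fin (Nat.card V), ∀ u v, G.Adj u v → (σ u).val % 2 ≠ (σ v).val % 2 := by
  obtain ⟨σ, col, hsym, hprop, hcross⟩ := h
  refine ⟨σ, ?_⟩
  suffices H : ∀ u v, G.Adj u v → σ u < σ v → (σ u).val % 2 ≠ (σ v).val % 2 by
    intro u v hadj
    rcases lt_trichotomy (σ u) (σ v) with hlt | heq | hlt
    · exact H u v hadj hlt
    · exact absurd (σ.injective heq) (G.ne_of_adj hadj)
    · exact (H v u (G.adj_symm hadj) hlt).symm
  intro u v hadj hlt
  obtain ⟨f, hf1, hf2, hf3, huniq⟩ := exists_pm G hreg col hsym hprop (col u v)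
  have hfu : f u = v := huniq u v hadj rfl
  set x := σ u with hx
  set y := σ v with hy
  have hxylt : x.val < y.val := hlt
  set g : Fin (Nat.card V) → Fin (Nat.card V) := fun z => σ (f (σ.symm z)) with hg
  have hginv : ∀ z, g (g z) = z := by
    intro z; simp only [hg, Equiv.symm_apply_apply, hf3, Equiv.apply_symm_apply]
  have hgne : ∀ z, g z ≠ z := by
    intro z hz
    have h' : f (σ.symm z) = σ.symm z := by
      have h2 := congrArg σ.symm hz
      simpa [hg] using h2
    exact G.ne_of_adj (hf1 (σ.symm z)) h'.symm
  have hkey : ∀ z ∈ Finset.Ioo x y, g z ∈ Finset.Ioo x y := by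
    intro z hz
    rw [Finset.mem_Ioo] at hz ⊢
    have hadjw : G.Adj (σ.symm z) (f (σ.symm z)) := hf1 (σ.symm z)
    have hcol : col (σ.symm z) (f (σ.symm z)) = col u v := hf2 (σ.symm z)
    have hne1 : g z ≠ x := by
      intro hh
      have h1 : f (σ.symm z) = u := σ.injective hh
      have h2 : σ.symm z = v := by
        rw [← hfu, ← h1, hf3]
      have : z = y := by rw [← Equiv.apply_symm_apply σ z, h2]
      rw [this] at hz; exact lt_irrefl _ hz.2
    have hne2 : g z ≠ y := by
      intro hh
      have h1 : f (σ.symm z) = v := σ.injective hh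
      have h2 : σ.symm z = u := by
        have := congrArg f h1
        rwa [hf3, ← hfu, hf3] at this
      have : z = x := by rw [← Equiv.apply_symm_apply σ z, h2]
      rw [this] at hz; exact lt_irrefl _ hz.1
    by_contra hout
    rw [not_and_or, not_lt, not_lt] at hout
    have hbet1 : ChordBetween z x y :=
      ⟨by rw [min_eq_left (le_of_lt hlt)]; exact hz.1,
       by rw [max_eq_right (le_of_lt hlt)]; exact hz.2⟩
    have hbet2 : ¬ ChordBetween (g z) x y := by
      rintro ⟨h1, h2⟩
      rw [min_eq_left (le_of_lt hlt)] at h1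
      rw [max_eq_right (le_of_lt hlt)] at h2
      rcases hout with hle | hle
      · rcases lt_or_eq_of_le hle with hlt' | heq'
        · exact absurd h1 (not_lt.2 (le_of_lt hlt'))
        · exact hne1 heq'
      · rcases lt_or_eq_of_le hle with hlt' | heq'
        · exact absurd h2 (not_lt.2 (le_of_lt hlt'))
        · exact hne2 heq'.symm
    have hcr : ChordCross x y (σ (σ.symm z)) (σ (f (σ.symm z))) := by
      rw [Equiv.apply_symm_apply]
      exact Or.inl ⟨hbet1, hbet2⟩
    exact hcross u v (σ.symm z) (f (σ.symm z)) hadj hadjw hcr hcol.symm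
  have heven : Even (Finset.Ioo x y).card :=
    even_finset_card_of_involutive _ g hkey (fun z _ => hginv z) (fun z _ => hgne z)
  rw [Fin.card_Ioo] at heven
  obtain ⟨t, ht⟩ := heven
  omega
/- ## The circulant graph -/

def Dset (n k : ℕ) : Set (ZMod n) := {1, -1, (k : ZMod n), -(k : ZMod n)}

lemma circ_adj {n k : ℕ} {u v : ZMod n} :
    (circ n k).Adj u v ↔ u ≠ v ∧ u - v ∈ Dset n k := by
  constructor
  · rintro ⟨hne, h⟩
    refine ⟨hne, ?_⟩
    rcases h with ⟨s, hs, h⟩ | ⟨s, hs, h⟩ <;>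
      rcases hs with rfl | rfl
    · left; simpa using h
    · right; right; left; simpa using h
    · right; left; rw [← neg_sub, h]; simp
    · right; right; right; rw [← neg_sub, h]; simp
  · rintro ⟨hne, h⟩
    refine ⟨hne, ?_⟩
    rcases h with h | h | h | h
    · exact Or.inl ⟨1, Or.inl rfl, by simpa using h⟩
    · refine Or.inr ⟨1, Or.inl rfl, ?_⟩
      rw [← neg_sub u v, h]; simp
    · exact Or.inl ⟨(k : ℤ), Or.inr rfl, by simpa using h⟩
    · refine Or.inr ⟨(k : ℤ), Or.inr rfl, ?_⟩
      rw [← neg_sub u v, h]; simp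

lemma zero_not_mem_Dset {n k : ℕ} (hn : 3 ≤ n) (hk1 : 1 ≤ k) (hk2 : k ≤ n / 2) :
    (0 : ZMod n) ∉ Dset n k := by
  haveI : Fact (1 < n) := ⟨by omega⟩
  have hk : (k : ZMod n) ≠ 0 := by
    rw [Ne, ZMod.natCast_eq_zero_iff]
    intro hdvd
    have h1 := Nat.le_of_dvd (by omega) hdvd
    have h2 := Nat.div_lt_self (by omega : 0 < n) (by norm_num : 1 < 2)
    omega
  have h1 : (1 : ZMod n) ≠ 0 := one_ne_zero
  rintro (h | h | h | h)
  · exact h1 h.symm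
  · exact h1 (neg_eq_zero.mp h.symm)
  · exact hk h.symm
  · exact hk (neg_eq_zero.mp h.symm)

lemma neighborSet_circ {n k : ℕ} (hn : 3 ≤ n) (hk1 : 1 ≤ k) (hk2 : k ≤ n / 2) (v : ZMod n) :
    (circ n k).neighborSet v = (fun s => v - s) '' (Dset n k) := by
  ext w
  simp only [mem_neighborSet, circ_adj, Set.mem_image]
  constructor
  · rintro ⟨hne, h⟩
    exact ⟨v - w, h, by ring⟩
  · rintro ⟨s, hs, rfl⟩
    have hs0 : s ≠ 0 := fun h => zero_not_mem_Dset hn hk1 hk2 (h ▸ hs)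
    refine ⟨fun h => hs0 ?_, by simpa using hs⟩
    have := sub_eq_zero.mpr h
    simpa using this

lemma ncard_neighborSet_circ {n k : ℕ} (hn : 3 ≤ n) (hk1 : 1 ≤ k) (hk2 : k ≤ n / 2)
    (v : ZMod n) : ((circ n k).neighborSet v).ncard = (Dset n k).ncard := by
  rw [neighborSet_circ hn hk1 hk2]
  exact Set.ncard_image_of_injective _ (fun a b h => by rwa [sub_right_inj] at h)

lemma maxDeg_circ {n k : ℕ} (hn : 3 ≤ n) (hk1 : 1 ≤ k) (hk2 : k ≤ n / 2) :
    maxDeg (circ n k) = (Dset n k).ncard := by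
  haveI : NeZero n := ⟨by omega⟩
  have hconst : (fun v : ZMod n => ((circ n k).neighborSet v).ncard) =
      fun _ => (Dset n k).ncard := funext (ncard_neighborSet_circ hn hk1 hk2)
  rw [maxDeg, hconst, Set.range_const, csSup_singleton]

lemma Dset_pos {n k : ℕ} (hn : 3 ≤ n) : 0 < (Dset n k).ncard := by
  haveI : NeZero n := ⟨by omega⟩
  rw [Set.ncard_pos (Set.toFinite _)]
  exact ⟨1, Or.inl rfl⟩

lemma circ_no_parity {n k : ℕ} (hn : 3 ≤ n) (hk1 : 1 ≤ k) (hk2 : k ≤ n / 2)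
    (hkeven : k % 2 = 0) (ε : ZMod n → ℕ) (hlt : ∀ v, ε v < 2)
    (hε : ∀ u v, (circ n k).Adj u v → ε u ≠ ε v) : False := by
  haveI : Fact (1 < n) := ⟨by omega⟩
  have hk0 : (k : ZMod n) ≠ 0 := by
    rw [Ne, ZMod.natCast_eq_zero_iff]
    intro hdvd
    have h1 := Nat.le_of_dvd (by omega) hdvd
    have h2 := Nat.div_lt_self (by omega : 0 < n) (by norm_num : 1 < 2)
    omega
  have hstep : ∀ j : ℕ, ε ((j : ℕ) : ZMod n) = (ε 0 + j) % 2 := by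
    intro j
    induction j with
    | zero => simp [Nat.mod_eq_of_lt (hlt 0)]
    | succ j ih =>
      have hadj : (circ n k).Adj ((j : ℕ) : ZMod n) (((j + 1 : ℕ)) : ZMod n) := by
        rw [circ_adj]
        constructor
        · intro h
          push_cast at h
          have : (1 : ZMod n) = 0 := by
            have := sub_eq_zero.mpr h
            simpa using this.symm
          exact one_ne_zero this
        · right; left; push_cast; ring
      have hne := hε _ _ hadj
      have l1 := hlt ((j : ℕ) : ZMod n)
      have l2 := hlt (((j + 1 : ℕ)) : ZMod n)
      omega
  have hadj0k : (circ n k).Adj (0 : ZMod n) ((k : ℕ) : ZMod n) := by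
    rw [circ_adj]
    refine ⟨fun h => hk0 h.symm, Or.inr (Or.inr (Or.inr ?_))⟩
    show (0 : ZMod n) - (k : ZMod n) = -(k : ZMod n)
    ring
  have hne := hε _ _ hadj0k
  have h1 := hstep k
  have l1 := hlt ((k : ℕ) : ZMod n)
  have l2 := hlt 0
  omega

/-- lower bounds on the matching book thickness of `C(n,k)`. -/
theorem stmt0 (n k : ℕ) (hn : 3 ≤ n) (hk1 : 1 ≤ k) (hk2 : k ≤ n / 2) :
    (Even n ∧ Odd k → maxDeg (circ n k) ≤ mbt (circ n k)) ∧
    (¬(Even n ∧ Odd k) → maxDeg (circ n k) + 1 ≤ mbt (circ n k)) := by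
  haveI : NeZero n := ⟨by omega⟩
  set d := (Dset n k).ncard with hd
  have hreg : ∀ v, ((circ n k).neighborSet v).ncard = d :=
    ncard_neighborSet_circ hn hk1 hk2
  have hmax : maxDeg (circ n k) = d := maxDeg_circ hn hk1 hk2
  have hSne : {m | HasMBE (circ n k) m}.Nonempty :=
    ⟨Nat.card (ZMod n) * Nat.card (ZMod n), hasMBE_sq _⟩
  have hmem : HasMBE (circ n k) (mbt (circ n k)) := Nat.sInf_mem hSne
  have hdle : d ≤ mbt (circ n k) := by
    have := le_of_hasMBE _ hmem (0 : ZMod n)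
    rwa [hreg] at this
  constructor
  · intro _
    rw [hmax]; exact hdle
  · intro hnot
    rw [hmax]
    rcases Nat.lt_or_ge d (mbt (circ n k)) with h | h
    · omega
    · exfalso
      have heq : mbt (circ n k) = d := le_antisymm h hdle
      rw [heq] at hmem
      by_cases hne : Even n
      · -- then k is even
        have hke : k % 2 = 0 := by
          rcases Nat.even_or_odd k with hk | hk
          · exact Nat.even_iff.mp hk
          · exact absurd ⟨hne, hk⟩ hnot
        obtain ⟨σ, hσ⟩ := parity_of_hasMBE _ hreg hmem
        exact circ_no_parity hn hk1 hk2 hke (fun v => (σ v).val % 2)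
          (fun v => Nat.mod_lt _ (by norm_num)) hσ
      · -- n odd
        exact odd_no_hasMBE _ hreg (Dset_pos hn) (by rwa [ZMod.card]) hmem
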